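/- Let 0 < α < β ≤ 1 and define ψ : ℝ → ℝ by ψ(t) = (α/β)·sinh((β − α)t)/(cosh(βt)·sinh(αt)) for t ≠ 0 and ψ(0) = (β − α)/β. Then for all t ∈ ℝ: 0 ≤ ψ(t) ≤ min( (β − α)/β , 1/(β·|t|) ), where the second bound is read as +∞ at t = 0. -/

import Mathlib

open Real

private lemma aux_sinh_le (x : ℝ) (hx : 0 ≤ x) : Real.sinh x ≤ x * Real.cosh x := by
  have h : MonotoneOn (fun y : ℝ => y * Real.cosh y - Real.sinh y) (Set.Ici 0) := by
    apply monotoneOn_of_deriv_nonneg (convex_Ici 0)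
    · exact ((continuous_id.mul Real.continuous_cosh).sub Real.continuous_sinh).continuousOn
    · intro y hy
      exact ((differentiableAt_id.mul Real.differentiable_cosh.differentiableAt).sub
        Real.differentiable_sinh.differentiableAt).differentiableWithinAt
    · intro y hy
      rw [interior_Ici, Set.mem_Ioi] at hy
      have : deriv (fun y : ℝ => y * Real.cosh y - Real.sinh y) y = y * Real.sinh y := by
        rw [deriv_fun_sub, deriv_fun_mul, Real.deriv_cosh, Real.deriv_sinh]
        · simp
        · exact differentiableAt_id
        · exact Real.differentiable_cosh.differentiableAt
        · exact differentiableAt_id.mul Real.differentiable_cosh.differentiableAt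
        · exact Real.differentiable_sinh.differentiableAt
      rw [this]
      exact mul_nonneg hy.le (Real.sinh_nonneg_iff.2 hy.le)
  have := h (Set.self_mem_Ici) (Set.mem_Ici.2 hx) hx
  simpa using this

private lemma aux_key (u v : ℝ) (hu : 0 < u) (huv : u ≤ v) :
    v * Real.sinh u ≤ u * Real.sinh v := by
  have h : MonotoneOn (fun y : ℝ => u * Real.sinh y - y * Real.sinh u) (Set.Ici u) := by
    apply monotoneOn_of_deriv_nonneg (convex_Ici u)
    · exact ((continuous_const.mul Real.continuous_sinh).sub
        (continuous_id.mul continuous_const)).continuousOn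
    · intro y hy
      exact (((Real.differentiable_sinh.differentiableAt).const_mul u).sub
        (differentiableAt_id.mul_const _)).differentiableWithinAt
    · intro y hy
      rw [interior_Ici, Set.mem_Ioi] at hy
      have hd : deriv (fun y : ℝ => u * Real.sinh y - y * Real.sinh u) y
          = u * Real.cosh y - Real.sinh u := by
        rw [deriv_fun_sub, deriv_const_mul, Real.deriv_sinh, deriv_mul_const]
        · simp
        · exact differentiableAt_id
        · exact Real.differentiable_sinh.differentiableAt
        · exact (Real.differentiable_sinh.differentiableAt).const_mul u
        · exact differentiableAt_id.mul_const _
      rw [hd, sub_nonneg]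
      calc Real.sinh u ≤ u * Real.cosh u := aux_sinh_le u hu.le
        _ ≤ u * Real.cosh y := by
            apply mul_le_mul_of_nonneg_left _ hu.le
            rw [Real.cosh_le_cosh]
            rw [abs_of_pos hu, abs_of_pos (hu.trans_le hy.le)]
            exact hy.le
  have := h (Set.self_mem_Ici) (Set.mem_Ici.2 huv) huv
  simp only [sub_self] at this
  linarith [this]

private lemma aux_main (a b : ℝ) (ha : 0 < a) (hab : a < b) :
    a * (Real.sinh b * Real.cosh a) ≤ b * (Real.sinh a * Real.cosh b) := by
  have h := aux_key (b - a) (a + b) (by linarith) (by linarith)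
  rw [show b - a = b + (-a) by ring] at h
  rw [Real.sinh_add, Real.sinh_add, Real.sinh_neg, Real.cosh_neg] at h
  nlinarith [h]

theorem statement18 (α β : ℝ) (hα : 0 < α) (hαβ : α < β) (hβ : β ≤ 1)
    (ψ : ℝ → ℝ) (hψ0 : ψ 0 = (β - α) / β)
    (hψ : ∀ t : ℝ, t ≠ 0 →
      ψ t = (α / β) * Real.sinh ((β - α) * t) / (Real.cosh (β * t) * Real.sinh (α * t))) :
    ∀ t : ℝ, 0 ≤ ψ t ∧ ψ t ≤ (β - α) / β ∧ (t ≠ 0 → ψ t ≤ 1 / (β * |t|)) := by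
  have hβ0 : (0:ℝ) < β := hα.trans hαβ
  -- main claim for positive t
  have key : ∀ t : ℝ, 0 < t →
      (0 ≤ (α / β) * Real.sinh ((β - α) * t) / (Real.cosh (β * t) * Real.sinh (α * t)) ∧
       (α / β) * Real.sinh ((β - α) * t) / (Real.cosh (β * t) * Real.sinh (α * t)) ≤ (β - α) / β ∧
       (α / β) * Real.sinh ((β - α) * t) / (Real.cosh (β * t) * Real.sinh (α * t)) ≤ 1 / (β * t)) := by
    intro t ht
    have ha : 0 < α * t := mul_pos hα ht
    have hb : 0 < β * t := mul_pos hβ0 ht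
    have hba : (β - α) * t = β * t - α * t := by ring
    have hS : 0 < Real.sinh ((β - α) * t) := Real.sinh_pos_iff.2 (by nlinarith)
    have hs : 0 < Real.sinh (α * t) := Real.sinh_pos_iff.2 ha
    have hC : 0 < Real.cosh (β * t) := Real.cosh_pos _
    have hden : 0 < Real.cosh (β * t) * Real.sinh (α * t) := mul_pos hC hs
    refine ⟨div_nonneg (mul_nonneg (div_nonneg hα.le hβ0.le) hS.le) hden.le, ?_, ?_⟩
    · rw [div_le_div_iff₀ hden hβ0]
      have hmain := aux_main (α * t) (β * t) ha (by nlinarith)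
      have hSeq : Real.sinh ((β - α) * t)
          = Real.sinh (β * t) * Real.cosh (α * t) - Real.cosh (β * t) * Real.sinh (α * t) := by
        rw [hba, Real.sinh_sub]
      rw [hSeq]
      have hαβt : α * Real.sinh (β * t) * Real.cosh (α * t)
          ≤ β * Real.cosh (β * t) * Real.sinh (α * t) := by nlinarith [hmain]
      have hβne : β ≠ 0 := hβ0.ne'
      field_simp
      nlinarith [hαβt, hC, hs]
    · rw [div_le_div_iff₀ hden (mul_pos hβ0 ht)]
      -- (α/β) * S * (β t) ≤ C * s
      have h1 : α * t ≤ Real.sinh (α * t) := Real.self_le_sinh_iff.2 ha.le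
      have h2 : Real.sinh ((β - α) * t) ≤ Real.cosh (β * t) := by
        calc Real.sinh ((β - α) * t) ≤ Real.sinh (β * t) := by
              rw [Real.sinh_le_sinh]; nlinarith
          _ ≤ Real.cosh (β * t) := by
              have := Real.cosh_sub_sinh (β * t)
              have := Real.exp_pos (-(β * t))
              linarith
      have hle : α * t * Real.sinh ((β - α) * t) ≤ Real.sinh (α * t) * Real.cosh (β * t) :=
        mul_le_mul h1 h2 hS.le hs.le
      have heq : α / β * Real.sinh ((β - α) * t) * (β * t)
          = α * t * Real.sinh ((β - α) * t) := by
        field_simp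
      rw [heq, one_mul]
      nlinarith [hle]
  intro t
  rcases lt_trichotomy t 0 with htn | ht0 | htp
  · have hψt := hψ t htn.ne
    have hflip : ψ t = (α / β) * Real.sinh ((β - α) * (-t)) /
        (Real.cosh (β * (-t)) * Real.sinh (α * (-t))) := by
      rw [hψt]
      rw [show (β - α) * (-t) = -((β - α) * t) by ring, show β * (-t) = -(β * t) by ring,
        show α * (-t) = -(α * t) by ring, Real.sinh_neg, Real.sinh_neg, Real.cosh_neg]
      ring
    obtain ⟨k1, k2, k3⟩ := key (-t) (by linarith)
    rw [hflip]
    refine ⟨k1, k2, fun _ => ?_⟩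
    rwa [abs_of_neg htn]
  · subst ht0
    rw [hψ0]
    refine ⟨div_nonneg (by linarith) hβ0.le, le_refl _, fun h => absurd rfl h⟩
  · have hψt := hψ t htp.ne'
    obtain ⟨k1, k2, k3⟩ := key t htp
    rw [hψt]
    refine ⟨k1, k2, fun _ => ?_⟩
    rwa [abs_of_pos htp]
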